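/- Let M be an n×n Manin matrix over an associative unital (possibly noncommutative) ring R, and let X be an arbitrary k×(n−k) matrix with entries in R (no commutativity assumptions on the entries of X). Then det^col( M · [[1_k, X],[0, 1_{n−k}]] ) = det^col(M), where [[1_k, X],[0, 1_{n−k}]] denotes the n×n block upper-unitriangular matrix with identity diagonal blocks and upper-right block X. -/

import Mathlib

open scoped BigOperators

/-- A matrix `M` over a (possibly noncommutative) ring is a *Manin matrix* if
entries of the same column commute and cross-commutators of 2×2 submatrices are equal. -/
def Matrix.IsManin {R : Type*} [Ring R] {n m : ℕ} (M : Matrix (Fin n) (Fin m) R) : Prop :=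
  (∀ i k : Fin n, ∀ j : Fin m, M i j * M k j = M k j * M i j) ∧
  (∀ i k : Fin n, ∀ j l : Fin m,
    M i j * M k l - M k l * M i j = M k j * M i l - M i l * M k j)

/-- Column determinant: factors multiplied in order of increasing column index. -/
noncomputable def Matrix.detCol {R : Type*} [Ring R] {n : ℕ}
    (M : Matrix (Fin n) (Fin n) R) : R :=
  ∑ σ : Equiv.Perm (Fin n),
    (Equiv.Perm.sign σ : ℤ) • ((List.finRange n).map (fun i => M (σ i) i)).prod

/-- Row determinant: factors multiplied in order of increasing row index. -/
noncomputable def Matrix.detRow {R : Type*} [Ring R] {n : ℕ}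
    (M : Matrix (Fin n) (Fin n) R) : R :=
  ∑ σ : Equiv.Perm (Fin n),
    (Equiv.Perm.sign σ : ℤ) • ((List.finRange n).map (fun i => M i (σ i))).prod

/-- Row permanent: factors multiplied in order of increasing row index. -/
noncomputable def Matrix.permRow {R : Type*} [Ring R] {n : ℕ}
    (M : Matrix (Fin n) (Fin n) R) : R :=
  ∑ σ : Equiv.Perm (Fin n), ((List.finRange n).map (fun i => M i (σ i))).prod

section ManinAux
open List Equiv Finset

section Core
variable {R : Type*} [Ring R] {n n' : ℕ}

-- helpers from p1 (assume present) --
lemma listProd_split1 {α : Type*} [Monoid α] (l : List α) (p : ℕ) (h : p < l.length) :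
    l.prod = (l.take p).prod * (l[p] * (l.drop (p+1)).prod) := by
  conv_lhs => rw [← List.take_append_drop p l]
  rw [List.prod_append, List.drop_eq_getElem_cons h, List.prod_cons]

lemma listProd_split2 {α : Type*} [Monoid α] (l : List α) (p : ℕ) (h : p + 1 < l.length) :
    l.prod = (l.take p).prod * (l[p] * (l[p+1] * (l.drop (p+2)).prod)) := by
  rw [listProd_split1 l p (by omega), List.drop_eq_getElem_cons (by omega : p+1 < l.length),
    List.prod_cons]

lemma val_lt_of_mem_take {m : ℕ} {x : Fin n} (hx : x ∈ (List.finRange n).take m) : (x:ℕ) < m := by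
  obtain ⟨i, hi, hg⟩ := List.mem_iff_getElem.mp hx
  rw [List.getElem_take, List.getElem_finRange] at hg
  have : i < m := lt_of_lt_of_le hi (by simp [List.length_take])
  have hxv : (x:ℕ) = i := by rw [← hg]; simp
  omega

lemma le_val_of_mem_drop_take {m d : ℕ} {x : Fin n}
    (hx : x ∈ ((List.finRange n).take m).drop d) : d ≤ (x:ℕ) := by
  obtain ⟨i, hi, hg⟩ := List.mem_iff_getElem.mp hx
  rw [List.getElem_drop, List.getElem_take, List.getElem_finRange] at hg
  have hxv : (x:ℕ) = d + i := by rw [← hg]; simp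
  omega

lemma le_val_of_mem_drop {d : ℕ} {x : Fin n}
    (hx : x ∈ (List.finRange n).drop d) : d ≤ (x:ℕ) := by
  obtain ⟨i, hi, hg⟩ := List.mem_iff_getElem.mp hx
  rw [List.getElem_drop, List.getElem_finRange] at hg
  have hxv : (x:ℕ) = d + i := by rw [← hg]; simp
  omega

lemma take_finRange_getElem {m p : ℕ} (h : p < ((List.finRange n).take m).length) :
    ((List.finRange n).take m)[p] = ⟨p, by simp [List.length_take] at h; omega⟩ := by
  rw [List.getElem_take, List.getElem_finRange]
  ext
  simp
-- end helpers --

/-- Permutations fixing everything above `b`. -/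
def Hset (n : ℕ) (b : Fin n) : Finset (Equiv.Perm (Fin n)) :=
  Finset.univ.filter fun π => ∀ c : Fin n, b < c → π c = c

/-- The "head" alternating sum over permutations fixing everything above `b`. -/
def Wsum (N : Matrix (Fin n) (Fin n') R) (g : Fin n → Fin n') (b : Fin n) : R :=
  ∑ π ∈ Hset n b, ((Equiv.Perm.sign π : ℤˣ) : ℤ) •
    (((List.finRange n).take ((b:ℕ)+1)).map (fun c => N (π c) (g c))).prod

lemma head_split (F : Fin n → R) {b u v : Fin n} (huv : (u:ℕ)+1 = (v:ℕ)) (hvb : v ≤ b) :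
    (((List.finRange n).take ((b:ℕ)+1)).map F).prod
      = (((List.finRange n).take (u:ℕ)).map F).prod *
        (F u * (F v * ((((List.finRange n).take ((b:ℕ)+1)).drop ((u:ℕ)+2)).map F).prod)) := by
  have hbn : (b:ℕ) < n := b.isLt
  have hub : (u:ℕ) < (b:ℕ) + 1 := by
    have := Fin.le_def.mp hvb; omega
  have hlen : ((((List.finRange n).take ((b:ℕ)+1)).map F)).length = (b:ℕ)+1 := by
    simp [List.length_take, List.length_map]
  rw [listProd_split2 _ (u:ℕ) (by rw [hlen]; have := Fin.le_def.mp hvb; omega)]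
  have e1 : (((List.finRange n).take ((b:ℕ)+1)).map F).take (u:ℕ)
      = ((List.finRange n).take (u:ℕ)).map F := by
    rw [← List.map_take, List.take_take, Nat.min_eq_left (by omega)]
  have e2 : (((List.finRange n).take ((b:ℕ)+1)).map F)[(u:ℕ)]'(by rw [hlen]; omega) = F u := by
    simp [take_finRange_getElem]
  have e3 : (((List.finRange n).take ((b:ℕ)+1)).map F)[(u:ℕ)+1]'(by rw [hlen]; have := Fin.le_def.mp hvb; omega) = F v := by
    simp [take_finRange_getElem]
    exact congrArg F (Fin.ext (by simpa using huv))
  have e4 : (((List.finRange n).take ((b:ℕ)+1)).map F).drop ((u:ℕ)+2)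
      = ((((List.finRange n).take ((b:ℕ)+1))).drop ((u:ℕ)+2)).map F := by
    rw [← List.map_drop]
  rw [e1, e2, e3, e4]

lemma ne_uv_of_mem_take {u v x : Fin n} (huv : (u:ℕ)+1 = (v:ℕ))
    (hx : x ∈ (List.finRange n).take (u:ℕ)) : x ≠ u ∧ x ≠ v := by
  have hxv : (x:ℕ) < (u:ℕ) := val_lt_of_mem_take hx
  exact ⟨Fin.ne_of_val_ne (by omega), Fin.ne_of_val_ne (by omega)⟩

lemma ne_uv_of_mem_drop {b u v x : Fin n} (huv : (u:ℕ)+1 = (v:ℕ))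
    (hx : x ∈ ((List.finRange n).take ((b:ℕ)+1)).drop ((u:ℕ)+2)) : x ≠ u ∧ x ≠ v := by
  have hxv : (u:ℕ)+2 ≤ (x:ℕ) := le_val_of_mem_drop_take hx
  exact ⟨Fin.ne_of_val_ne (by omega), Fin.ne_of_val_ne (by omega)⟩

lemma swap_mem_Hset {b u v : Fin n} (huv : (u:ℕ)+1 = (v:ℕ)) (hvb : v ≤ b)
    {π : Equiv.Perm (Fin n)} (hπ : π ∈ Hset n b) : π * Equiv.swap u v ∈ Hset n b := by
  simp only [Hset, Finset.mem_filter, Finset.mem_univ, true_and] at hπ ⊢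
  intro c hc
  have hcv : (b:ℕ) < (c:ℕ) := hc
  have hvb' : (v:ℕ) ≤ (b:ℕ) := hvb
  have h1 : c ≠ u := Fin.ne_of_val_ne (by omega)
  have h2 : c ≠ v := Fin.ne_of_val_ne (by omega)
  rw [Equiv.Perm.mul_apply, Equiv.swap_apply_of_ne_of_ne h1 h2]
  exact hπ c hc

lemma swap_ne_self {u v : Fin n} (huv : (u:ℕ)+1 = (v:ℕ)) (π : Equiv.Perm (Fin n)) :
    π * Equiv.swap u v ≠ π := by
  intro he
  have h0 := congrArg (fun σ : Equiv.Perm (Fin n) => σ v) he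
  simp only [Equiv.Perm.mul_apply, Equiv.swap_apply_right] at h0
  have := π.injective h0
  exact Fin.ne_of_val_ne (by omega : (u:ℕ) ≠ (v:ℕ)) this

lemma sign_mul_swap_int {u v : Fin n} (huv : (u:ℕ)+1 = (v:ℕ)) (π : Equiv.Perm (Fin n)) :
    ((Equiv.Perm.sign (π * Equiv.swap u v) : ℤˣ) : ℤ) = -((Equiv.Perm.sign π : ℤˣ) : ℤ) := by
  rw [Equiv.Perm.sign_mul, Equiv.Perm.sign_swap (Fin.ne_of_val_ne (by omega : (u:ℕ) ≠ (v:ℕ)))]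
  simp

variable (N : Matrix (Fin n) (Fin n') R)

/-- Vanishing for adjacent equal columns. -/
lemma Wsum_adj_eq (hcol : ∀ i k : Fin n, ∀ j : Fin n', N i j * N k j = N k j * N i j)
    (g : Fin n → Fin n') {b u v : Fin n} (huv : (u:ℕ)+1 = (v:ℕ)) (hvb : v ≤ b)
    (hg : g u = g v) : Wsum N g b = 0 := by
  unfold Wsum
  refine Finset.sum_involution (fun π _ => π * Equiv.swap u v)
    (fun π hπ => ?_) (fun π _ _ => swap_ne_self huv π)
    (fun π hπ => swap_mem_Hset huv hvb hπ) (fun π hπ => by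
      show π * Equiv.swap u v * Equiv.swap u v = π
      rw [mul_assoc, Equiv.swap_mul_self, mul_one])
  have hT1 : ((List.finRange n).take (u:ℕ)).map (fun c => N ((π * Equiv.swap u v) c) (g c))
      = ((List.finRange n).take (u:ℕ)).map (fun c => N (π c) (g c)) := by
    refine List.map_congr_left (fun x hx => ?_)
    obtain ⟨h1, h2⟩ := ne_uv_of_mem_take huv hx
    rw [Equiv.Perm.mul_apply, Equiv.swap_apply_of_ne_of_ne h1 h2]
  have hT2 : (((List.finRange n).take ((b:ℕ)+1)).drop ((u:ℕ)+2)).map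
        (fun c => N ((π * Equiv.swap u v) c) (g c))
      = (((List.finRange n).take ((b:ℕ)+1)).drop ((u:ℕ)+2)).map (fun c => N (π c) (g c)) := by
    refine List.map_congr_left (fun x hx => ?_)
    obtain ⟨h1, h2⟩ := ne_uv_of_mem_drop huv hx
    rw [Equiv.Perm.mul_apply, Equiv.swap_apply_of_ne_of_ne h1 h2]
  rw [head_split (fun c => N ((π * Equiv.swap u v) c) (g c)) huv hvb,
    head_split (fun c => N (π c) (g c)) huv hvb, hT1, hT2,
    sign_mul_swap_int huv π]
  have hu' : (π * Equiv.swap u v) u = π v := by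
    rw [Equiv.Perm.mul_apply, Equiv.swap_apply_left]
  have hv' : (π * Equiv.swap u v) v = π u := by
    rw [Equiv.Perm.mul_apply, Equiv.swap_apply_right]
  rw [hu', hv', hg]
  set T1 := (((List.finRange n).take (u:ℕ)).map (fun c => N (π c) (g c))).prod
  set T2 := ((((List.finRange n).take ((b:ℕ)+1)).drop ((u:ℕ)+2)).map
    (fun c => N (π c) (g c))).prod
  rw [← mul_assoc (N (π u) (g v)), ← mul_assoc (N (π v) (g v)), hcol (π u) (π v) (g v)]
  rw [neg_smul, add_neg_cancel]

/-- Antisymmetry under swapping two adjacent column indices. -/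
lemma Wsum_adj_swap
    (hcross : ∀ i k : Fin n, ∀ j l : Fin n',
      N i j * N k l - N k l * N i j = N k j * N i l - N i l * N k j)
    (g : Fin n → Fin n') {b u v : Fin n} (huv : (u:ℕ)+1 = (v:ℕ)) (hvb : v ≤ b) :
    Wsum N g b + Wsum N (g ∘ Equiv.swap u v) b = 0 := by
  unfold Wsum
  rw [← Finset.sum_add_distrib]
  refine Finset.sum_involution (fun π _ => π * Equiv.swap u v)
    (fun π hπ => ?_) (fun π _ _ => swap_ne_self huv π)
    (fun π hπ => swap_mem_Hset huv hvb hπ) (fun π hπ => by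
      show π * Equiv.swap u v * Equiv.swap u v = π
      rw [mul_assoc, Equiv.swap_mul_self, mul_one])
  have stab : ∀ (π' : Equiv.Perm (Fin n)) (g' : Fin n → Fin n') (x : Fin n),
      x ≠ u → x ≠ v → N ((π' * Equiv.swap u v) x) ((g' ∘ Equiv.swap u v) x) = N (π' x) (g' x) := by
    intro π' g' x h1 h2
    rw [Function.comp_apply, Equiv.Perm.mul_apply, Equiv.swap_apply_of_ne_of_ne h1 h2]
  -- rewrite the four head products
  rw [head_split (fun c => N (π c) (g c)) huv hvb,
    head_split (fun c => N (π c) ((g ∘ Equiv.swap u v) c)) huv hvb,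
    head_split (fun c => N ((π * Equiv.swap u v) c) (g c)) huv hvb,
    head_split (fun c => N ((π * Equiv.swap u v) c) ((g ∘ Equiv.swap u v) c)) huv hvb]
  have hT1a : ((List.finRange n).take (u:ℕ)).map (fun c => N ((π * Equiv.swap u v) c) (g c))
      = ((List.finRange n).take (u:ℕ)).map (fun c => N (π c) (g c)) := by
    refine List.map_congr_left (fun x hx => ?_)
    obtain ⟨h1, h2⟩ := ne_uv_of_mem_take huv hx
    rw [Equiv.Perm.mul_apply, Equiv.swap_apply_of_ne_of_ne h1 h2]
  have hT1b : ((List.finRange n).take (u:ℕ)).map (fun c => N (π c) ((g ∘ Equiv.swap u v) c))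
      = ((List.finRange n).take (u:ℕ)).map (fun c => N (π c) (g c)) := by
    refine List.map_congr_left (fun x hx => ?_)
    obtain ⟨h1, h2⟩ := ne_uv_of_mem_take huv hx
    rw [Function.comp_apply, Equiv.swap_apply_of_ne_of_ne h1 h2]
  have hT1c : ((List.finRange n).take (u:ℕ)).map
        (fun c => N ((π * Equiv.swap u v) c) ((g ∘ Equiv.swap u v) c))
      = ((List.finRange n).take (u:ℕ)).map (fun c => N (π c) (g c)) := by
    refine List.map_congr_left (fun x hx => ?_)
    obtain ⟨h1, h2⟩ := ne_uv_of_mem_take huv hx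
    exact stab π g x h1 h2
  have hT2a : (((List.finRange n).take ((b:ℕ)+1)).drop ((u:ℕ)+2)).map
        (fun c => N ((π * Equiv.swap u v) c) (g c))
      = (((List.finRange n).take ((b:ℕ)+1)).drop ((u:ℕ)+2)).map (fun c => N (π c) (g c)) := by
    refine List.map_congr_left (fun x hx => ?_)
    obtain ⟨h1, h2⟩ := ne_uv_of_mem_drop huv hx
    rw [Equiv.Perm.mul_apply, Equiv.swap_apply_of_ne_of_ne h1 h2]
  have hT2b : (((List.finRange n).take ((b:ℕ)+1)).drop ((u:ℕ)+2)).map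
        (fun c => N (π c) ((g ∘ Equiv.swap u v) c))
      = (((List.finRange n).take ((b:ℕ)+1)).drop ((u:ℕ)+2)).map (fun c => N (π c) (g c)) := by
    refine List.map_congr_left (fun x hx => ?_)
    obtain ⟨h1, h2⟩ := ne_uv_of_mem_drop huv hx
    rw [Function.comp_apply, Equiv.swap_apply_of_ne_of_ne h1 h2]
  have hT2c : (((List.finRange n).take ((b:ℕ)+1)).drop ((u:ℕ)+2)).map
        (fun c => N ((π * Equiv.swap u v) c) ((g ∘ Equiv.swap u v) c))
      = (((List.finRange n).take ((b:ℕ)+1)).drop ((u:ℕ)+2)).map (fun c => N (π c) (g c)) := by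
    refine List.map_congr_left (fun x hx => ?_)
    obtain ⟨h1, h2⟩ := ne_uv_of_mem_drop huv hx
    exact stab π g x h1 h2
  rw [hT1a, hT1b, hT1c, hT2a, hT2b, hT2c, sign_mul_swap_int huv π]
  have hu' : (π * Equiv.swap u v) u = π v := by
    rw [Equiv.Perm.mul_apply, Equiv.swap_apply_left]
  have hv' : (π * Equiv.swap u v) v = π u := by
    rw [Equiv.Perm.mul_apply, Equiv.swap_apply_right]
  have hgu : (g ∘ Equiv.swap u v) u = g v := by
    rw [Function.comp_apply, Equiv.swap_apply_left]
  have hgv : (g ∘ Equiv.swap u v) v = g u := by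
    rw [Function.comp_apply, Equiv.swap_apply_right]
  rw [hu', hv', hgu, hgv]
  set T1 := (((List.finRange n).take (u:ℕ)).map (fun c => N (π c) (g c))).prod
  set T2 := ((((List.finRange n).take ((b:ℕ)+1)).drop ((u:ℕ)+2)).map
    (fun c => N (π c) (g c))).prod
  set A := N (π u) (g u)
  set B := N (π v) (g v)
  set C := N (π v) (g u)
  set D := N (π u) (g v)
  set e : ℤ := ((Equiv.Perm.sign π : ℤˣ) : ℤ)
  have hz : A * B + D * C - C * D - B * A = 0 := by
    have h := hcross (π u) (π v) (g u) (g v)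
    have h2 : A * B + D * C - C * D - B * A = (A * B - B * A) - (C * D - D * C) := by abel
    rw [h2, h]
    abel
  have hcomb : T1 * (A * (B * T2)) + T1 * (D * (C * T2))
      - T1 * (C * (D * T2)) - T1 * (B * (A * T2))
      = T1 * ((A * B + D * C - C * D - B * A) * T2) := by noncomm_ring
  have key : e • (T1 * (A * (B * T2))) + e • (T1 * (D * (C * T2)))
      + ((-e) • (T1 * (C * (D * T2))) + (-e) • (T1 * (B * (A * T2)))) = 0 := by
    have hmod : e • (T1 * (A * (B * T2))) + e • (T1 * (D * (C * T2)))
        + ((-e) • (T1 * (C * (D * T2))) + (-e) • (T1 * (B * (A * T2))))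
        = e • (T1 * (A * (B * T2)) + T1 * (D * (C * T2))
            - T1 * (C * (D * T2)) - T1 * (B * (A * T2))) := by
      simp only [neg_smul, smul_sub, smul_add]
      abel
    rw [hmod, hcomb, hz, zero_mul, mul_zero, smul_zero]
  exact key

/-- Vanishing of the head alternating sum with a repeated column index. -/
lemma Wsum_repeat (hcol : ∀ i k : Fin n, ∀ j : Fin n', N i j * N k j = N k j * N i j)
    (hcross : ∀ i k : Fin n, ∀ j l : Fin n',
      N i j * N k l - N k l * N i j = N k j * N i l - N i l * N k j)
    (b : Fin n) :
    ∀ (d : ℕ) (g : Fin n → Fin n') (a b' : Fin n),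
      (b':ℕ) = (a:ℕ) + d + 1 → b' ≤ b → g a = g b' → Wsum N g b = 0 := by
  intro d
  induction d with
  | zero =>
    intro g a b' hd hb hg
    exact Wsum_adj_eq N hcol g (by omega : (a:ℕ)+1 = (b':ℕ)) hb hg
  | succ d ih =>
    intro g a b' hd hb hg
    have hb'n : (b':ℕ) < n := b'.isLt
    set u : Fin n := ⟨(b':ℕ) - 1, by omega⟩ with hu
    have huv : (u:ℕ)+1 = (b':ℕ) := by simp [hu]; omega
    have h2 := Wsum_adj_swap N hcross g huv hb
    have h3 : Wsum N (g ∘ Equiv.swap u b') b = 0 := by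
      refine ih (g ∘ Equiv.swap u b') a u ?_ ?_ ?_
      · simp [hu]; omega
      · have : (u:ℕ) ≤ (b:ℕ) := by
          have := Fin.le_def.mp hb; simp [hu]; omega
        exact Fin.le_def.mpr this
      · have ha1 : a ≠ u := Fin.ne_of_val_ne (by simp [hu]; omega)
        have ha2 : a ≠ b' := Fin.ne_of_val_ne (by omega)
        rw [Function.comp_apply, Function.comp_apply,
          Equiv.swap_apply_of_ne_of_ne ha1 ha2, Equiv.swap_apply_left]
        exact hg
    rw [h3, add_zero] at h2
    exact h2

/-- Vanishing, with scalar factors above position `b`, over the subgroup `Hset`. -/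
lemma Hsum_repeat (hcol : ∀ i k : Fin n, ∀ j : Fin n', N i j * N k j = N k j * N i j)
    (hcross : ∀ i k : Fin n, ∀ j l : Fin n',
      N i j * N k l - N k l * N i j = N k j * N i l - N i l * N k j)
    (g : Fin n → Fin n') (y : Fin n → R) {a b : Fin n} (hab : a < b) (hg : g a = g b)
    (hy : ∀ c : Fin n, c < b → y c = 1) :
    ∑ π ∈ Hset n b, ((Equiv.Perm.sign π : ℤˣ) : ℤ) •
      ((List.finRange n).map (fun c => N (π c) (g c) * y c)).prod = 0 := by
  have hbn : (b:ℕ) < n := b.isLt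
  set K : R := y b * (((List.finRange n).drop ((b:ℕ)+1)).map (fun c => N c (g c) * y c)).prod
    with hK
  have hterm : ∀ π ∈ Hset n b,
      ((List.finRange n).map (fun c => N (π c) (g c) * y c)).prod
        = (((List.finRange n).take ((b:ℕ)+1)).map (fun c => N (π c) (g c))).prod * K := by
    intro π hπ
    have hπ' : ∀ c : Fin n, b < c → π c = c := by
      simpa [Hset, Finset.mem_filter] using hπ
    have hlen1 : ((List.finRange n).map (fun c => N (π c) (g c) * y c)).length = n := by simp
    rw [listProd_split1 _ (b:ℕ) (by rw [hlen1]; omega)]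
    have e1 : ((List.finRange n).map (fun c => N (π c) (g c) * y c)).take (b:ℕ)
        = ((List.finRange n).take (b:ℕ)).map (fun c => N (π c) (g c)) := by
      rw [← List.map_take]
      refine List.map_congr_left (fun x hx => ?_)
      have hxb : (x:ℕ) < (b:ℕ) := val_lt_of_mem_take hx
      rw [hy x (Fin.lt_def.mpr hxb), mul_one]
    have e2 : ((List.finRange n).map (fun c => N (π c) (g c) * y c))[(b:ℕ)]'(by rw [hlen1]; omega)
        = N (π b) (g b) * y b := by
      rw [List.getElem_map, List.getElem_finRange]
      congr 2 <;> · congr 1; ext; simp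
    have e3 : ((List.finRange n).map (fun c => N (π c) (g c) * y c)).drop ((b:ℕ)+1)
        = ((List.finRange n).drop ((b:ℕ)+1)).map (fun c => N c (g c) * y c) := by
      rw [← List.map_drop]
      refine List.map_congr_left (fun x hx => ?_)
      have hxb : (b:ℕ)+1 ≤ (x:ℕ) := le_val_of_mem_drop hx
      rw [hπ' x (Fin.lt_def.mpr (by omega))]
    rw [e1, e2, e3]
    have hhead : (((List.finRange n).take ((b:ℕ)+1)).map (fun c => N (π c) (g c))).prod
        = (((List.finRange n).take (b:ℕ)).map (fun c => N (π c) (g c))).prod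
          * N (π b) (g b) := by
      have hlen2 : (((List.finRange n).take ((b:ℕ)+1)).map (fun c => N (π c) (g c))).length
          = (b:ℕ)+1 := by simp [List.length_take]
      rw [listProd_split1 _ (b:ℕ) (by rw [hlen2]; omega)]
      have f1 : (((List.finRange n).take ((b:ℕ)+1)).map (fun c => N (π c) (g c))).take (b:ℕ)
          = ((List.finRange n).take (b:ℕ)).map (fun c => N (π c) (g c)) := by
        rw [← List.map_take, List.take_take, Nat.min_eq_left (by omega)]
      have f2 : (((List.finRange n).take ((b:ℕ)+1)).map (fun c => N (π c) (g c)))[(b:ℕ)]'(by rw [hlen2]; omega)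
          = N (π b) (g b) := by
        simp [take_finRange_getElem]
      have f3 : (((List.finRange n).take ((b:ℕ)+1)).map (fun c => N (π c) (g c))).drop ((b:ℕ)+1)
          = [] := by
        apply List.drop_eq_nil_of_le
        rw [hlen2]
      rw [f1, f2, f3, List.prod_nil, mul_one]
    rw [hhead, hK]
    noncomm_ring
  calc ∑ π ∈ Hset n b, ((Equiv.Perm.sign π : ℤˣ) : ℤ) •
      ((List.finRange n).map (fun c => N (π c) (g c) * y c)).prod
      = ∑ π ∈ Hset n b, (((Equiv.Perm.sign π : ℤˣ) : ℤ) •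
          (((List.finRange n).take ((b:ℕ)+1)).map (fun c => N (π c) (g c))).prod) * K := by
        refine Finset.sum_congr rfl (fun π hπ => ?_)
        rw [hterm π hπ, smul_mul_assoc]
    _ = Wsum N g b * K := by rw [← Finset.sum_mul]; rfl
    _ = 0 := by
        have hd : (b:ℕ) = (a:ℕ) + ((b:ℕ) - (a:ℕ) - 1) + 1 := by
          have := Fin.lt_def.mp hab; omega
        rw [Wsum_repeat N hcol hcross b ((b:ℕ) - (a:ℕ) - 1) g a b hd le_rfl hg, zero_mul]

/-- Main vanishing lemma: full alternating sum over all permutations, with a repeated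
column index below `b` and scalar factors equal to `1` below `b`. -/
lemma full_repeat (M : Matrix (Fin n) (Fin n) R) (hM : M.IsManin)
    (g : Fin n → Fin n) (y : Fin n → R) {a b : Fin n} (hab : a < b) (hg : g a = g b)
    (hy : ∀ c : Fin n, c < b → y c = 1) :
    ∑ σ : Equiv.Perm (Fin n), ((Equiv.Perm.sign σ : ℤˣ) : ℤ) •
      ((List.finRange n).map (fun c => M (σ c) (g c) * y c)).prod = 0 := by
  classical
  set F : Equiv.Perm (Fin n) → R := fun σ => ((Equiv.Perm.sign σ : ℤˣ) : ℤ) •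
    ((List.finRange n).map (fun c => M (σ c) (g c) * y c)).prod with hF
  set q : Equiv.Perm (Fin n) → (Fin n → Fin n) := fun σ c => if b < c then σ c else c with hq
  rw [← Finset.sum_fiberwise_of_maps_to (t := (Finset.univ : Finset (Fin n → Fin n)))
    (fun σ _ => Finset.mem_univ (q σ)) F]
  refine Finset.sum_eq_zero (fun t _ => ?_)
  rcases Finset.eq_empty_or_nonempty (Finset.univ.filter fun σ => q σ = t) with he | hne
  · rw [he, Finset.sum_empty]
  obtain ⟨σ₀, hσ₀⟩ := hne
  have hqσ₀ : q σ₀ = t := (Finset.mem_filter.mp hσ₀).2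
  have key : ∑ σ ∈ Finset.univ.filter (fun σ => q σ = t), F σ
      = ∑ π ∈ Hset n b, ((Equiv.Perm.sign σ₀ : ℤˣ) : ℤ) •
          (((Equiv.Perm.sign π : ℤˣ) : ℤ) •
            ((List.finRange n).map
              (fun c => (M.submatrix σ₀ id) (π c) (g c) * y c)).prod) := by
    refine Finset.sum_nbij' (fun σ => σ₀⁻¹ * σ) (fun π => σ₀ * π) ?_ ?_ ?_ ?_ ?_
    · intro σ hσ
      have hqσ : q σ = t := (Finset.mem_filter.mp hσ).2
      simp only [Hset, Finset.mem_filter, Finset.mem_univ, true_and]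
      intro c hc
      have h1 : σ c = t c := by rw [← hqσ]; simp [hq, if_pos hc]
      have h2 : σ₀ c = t c := by rw [← hqσ₀]; simp [hq, if_pos hc]
      rw [Equiv.Perm.mul_apply, h1, ← h2, Equiv.Perm.inv_def, Equiv.symm_apply_apply]
    · intro π hπ
      have hπ' : ∀ c : Fin n, b < c → π c = c := by
        simpa [Hset, Finset.mem_filter] using hπ
      simp only [Finset.mem_filter, Finset.mem_univ, true_and]
      funext c
      by_cases hc : b < c
      · simp only [hq, if_pos hc, Equiv.Perm.mul_apply, hπ' c hc]
        rw [← hqσ₀]; simp [hq, if_pos hc]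
      · simp only [hq, if_neg hc]
        rw [← hqσ₀]; simp [hq, if_neg hc]
    · intro σ _; exact mul_inv_cancel_left σ₀ σ
    · intro π _; exact inv_mul_cancel_left σ₀ π
    · intro σ _
      have h1 : (((Equiv.Perm.sign σ₀ : ℤˣ) : ℤ)) •
          ((((Equiv.Perm.sign (σ₀⁻¹ * σ) : ℤˣ) : ℤ)) •
            ((List.finRange n).map
              (fun c => (M.submatrix σ₀ id) ((σ₀⁻¹ * σ) c) (g c) * y c)).prod)
          = F σ := by
        rw [smul_smul]
        have hsgn : ((Equiv.Perm.sign σ₀ : ℤˣ) : ℤ) * ((Equiv.Perm.sign (σ₀⁻¹ * σ) : ℤˣ) : ℤ)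
            = ((Equiv.Perm.sign σ : ℤˣ) : ℤ) := by
          rw [← Units.val_mul, ← Equiv.Perm.sign_mul, mul_inv_cancel_left]
        have hfun : (fun c => (M.submatrix σ₀ id) ((σ₀⁻¹ * σ) c) (g c) * y c)
            = (fun c => M (σ c) (g c) * y c) := by
          funext c
          simp [Matrix.submatrix_apply, Equiv.Perm.mul_apply, Equiv.Perm.inv_def, Equiv.apply_symm_apply]
        rw [hsgn, hfun]
      exact h1.symm
  rw [key, ← Finset.smul_sum]
  have hvan := Hsum_repeat (M.submatrix σ₀ id)
    (fun i k j => hM.1 (σ₀ i) (σ₀ k) j)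
    (fun i k j l => hM.2 (σ₀ i) (σ₀ k) j l)
    g y hab hg hy
  rw [hvan, smul_zero]

end Core


section Expand
variable {R : Type*} [Ring R]

/-- Expand a product of sums (noncommutative multilinearity). -/
lemma prod_sum_expand {κ : Type*} [Fintype κ] :
    ∀ (m : ℕ) (E : Fin m → κ → R),
    ((List.finRange m).map (fun c => ∑ j : κ, E c j)).prod
      = ∑ g : Fin m → κ, ((List.finRange m).map (fun c => E c (g c))).prod := by
  intro m
  induction m with
  | zero =>
    intro E
    simp [List.finRange_zero]
  | succ m ih =>
    intro E
    have hcons : ∀ (p : κ × (Fin m → κ)),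
        ((List.finRange (m+1)).map (fun c => E c ((Fin.consEquiv (fun _ => κ)) p c))).prod
          = E 0 p.1 * ((List.finRange m).map (fun c => E c.succ (p.2 c))).prod := by
      intro p
      rw [List.finRange_succ, List.map_cons, List.prod_cons, List.map_map]
      simp [Function.comp_def, Fin.consEquiv]
    have key := (Fintype.sum_equiv (Fin.consEquiv (fun _ : Fin (m+1) => κ))
        (fun p : κ × (Fin m → κ) =>
          E 0 p.1 * ((List.finRange m).map (fun c => E c.succ (p.2 c))).prod)
        (fun g : Fin (m+1) → κ => ((List.finRange (m+1)).map (fun c => E c (g c))).prod)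
        (fun p => (hcons p).symm)).symm
    rw [key, Fintype.sum_prod_type]
    rw [List.finRange_succ, List.map_cons, List.prod_cons, List.map_map,
      show ((fun c => ∑ j : κ, E c j) ∘ Fin.succ) = (fun c : Fin m => ∑ j : κ, E c.succ j)
        from rfl,
      ih (fun c j => E c.succ j), Finset.sum_mul]
    exact Finset.sum_congr rfl (fun j _ => Finset.mul_sum _ _ _)

end Expand


end ManinAux

/-- multiplying a Manin matrix on the right by a block upper-unitriangular
matrix `[[1, X], [0, 1]]` (with arbitrary upper-right block `X`) does not change the
column determinant. -/
theorem detCol_mul_block_unitriangular {R : Type*} [Ring R] {k l : ℕ}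
    (M : Matrix (Fin (k + l)) (Fin (k + l)) R) (hM : M.IsManin)
    (X : Matrix (Fin k) (Fin l) R) :
    (M * (Matrix.fromBlocks 1 X 0 1).submatrix
        (⇑finSumFinEquiv.symm) (⇑finSumFinEquiv.symm)).detCol = M.detCol := by
  classical
  set U : Matrix (Fin (k+l)) (Fin (k+l)) R :=
    (Matrix.fromBlocks 1 X 0 1).submatrix (⇑finSumFinEquiv.symm) (⇑finSumFinEquiv.symm)
    with hU
  have hUdiag : ∀ c, U c c = 1 := by
    intro c
    rcases h : finSumFinEquiv.symm c with a | s <;>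
      simp [hU, Matrix.submatrix_apply, h]
  have hexp : (M * U).detCol
      = ∑ g : Fin (k+l) → Fin (k+l), ∑ σ : Equiv.Perm (Fin (k+l)),
        ((Equiv.Perm.sign σ : ℤˣ) : ℤ) •
          ((List.finRange (k+l)).map (fun c => M (σ c) (g c) * U (g c) c)).prod := by
    unfold Matrix.detCol
    have h1 : ∀ σ : Equiv.Perm (Fin (k+l)),
        ((List.finRange (k+l)).map (fun c => (M * U) (σ c) c)).prod
          = ∑ g : Fin (k+l) → Fin (k+l),
              ((List.finRange (k+l)).map (fun c => M (σ c) (g c) * U (g c) c)).prod := by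
      intro σ
      rw [← prod_sum_expand (k+l) (fun c j => M (σ c) j * U j c)]
      exact congrArg List.prod (List.map_congr_left (fun c _ => Matrix.mul_apply))
    rw [show (∑ σ : Equiv.Perm (Fin (k+l)), ((Equiv.Perm.sign σ : ℤˣ) : ℤ) •
        ((List.finRange (k+l)).map (fun c => (M * U) (σ c) c)).prod)
      = ∑ σ : Equiv.Perm (Fin (k+l)), ∑ g : Fin (k+l) → Fin (k+l),
          ((Equiv.Perm.sign σ : ℤˣ) : ℤ) •
            ((List.finRange (k+l)).map (fun c => M (σ c) (g c) * U (g c) c)).prod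
      from Finset.sum_congr rfl (fun σ _ => by rw [h1 σ, Finset.smul_sum])]
    exact Finset.sum_comm
  rw [hexp]
  rw [Finset.sum_eq_single_of_mem id (Finset.mem_univ id) ?side]
  · unfold Matrix.detCol
    refine Finset.sum_congr rfl (fun σ _ => ?_)
    refine congrArg (fun z : R => ((Equiv.Perm.sign σ : ℤˣ) : ℤ) • z)
      (congrArg List.prod (List.map_congr_left (fun c _ => ?_)))
    show M (σ c) c * U c c = M (σ c) c
    rw [hUdiag c, mul_one]
  case side =>
    intro g _ hgne
    have hne : ∃ c, g c ≠ c := by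
      by_contra h
      push_neg at h
      exact hgne (funext h)
    set s : Finset (Fin (k+l)) := Finset.univ.filter (fun c => g c ≠ c) with hs
    have hsne : s.Nonempty := by
      obtain ⟨c, hc⟩ := hne
      exact ⟨c, by simp [hs, hc]⟩
    set c₀ := s.min' hsne with hc₀
    have hgc₀ : g c₀ ≠ c₀ := by
      have := s.min'_mem hsne
      simpa [hs] using this
    have hmin : ∀ c : Fin (k+l), c < c₀ → g c = c := by
      intro c hc
      by_contra hcc
      have : c₀ ≤ c := Finset.min'_le s c (by simp [hs, hcc])
      exact absurd hc (not_lt.mpr this)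
    by_cases h0 : U (g c₀) c₀ = 0
    · refine Finset.sum_eq_zero (fun σ _ => ?_)
      have hmem : (0:R) ∈ (List.finRange (k+l)).map (fun c => M (σ c) (g c) * U (g c) c) := by
        refine List.mem_map.mpr ⟨c₀, List.mem_finRange c₀, ?_⟩
        rw [h0, mul_zero]
      rw [List.prod_eq_zero hmem, smul_zero]
    · rcases h1 : finSumFinEquiv.symm (g c₀) with a | s1
      · rcases h2 : finSumFinEquiv.symm c₀ with a2 | s2
        · -- both in first block: U entry is 1 a a2, forces g c₀ = c₀
          exfalso
          have hval : U (g c₀) c₀ = (1 : Matrix (Fin k) (Fin k) R) a a2 := by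
            simp [hU, Matrix.submatrix_apply, h1, h2]
          by_cases haa : a = a2
          · apply hgc₀
            apply finSumFinEquiv.symm.injective
            rw [h1, h2, haa]
          · exact h0 (hval.trans (Matrix.one_apply_ne haa))
        · -- good case
          have hg0 : g c₀ = finSumFinEquiv (Sum.inl a) := (Equiv.symm_apply_eq _).mp h1
          have hc0 : c₀ = finSumFinEquiv (Sum.inr s2) := (Equiv.symm_apply_eq _).mp h2
          have hvg : ((g c₀ : Fin (k+l)) : ℕ) = (a : ℕ) := by
            rw [hg0, finSumFinEquiv_apply_left]
            simp
          have hvc : ((c₀ : Fin (k+l)) : ℕ) = k + (s2 : ℕ) := by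
            rw [hc0, finSumFinEquiv_apply_right]
            simp
          have hab : g c₀ < c₀ := by
            rw [Fin.lt_def, hvg, hvc]
            omega
          have hgfix : g (g c₀) = g c₀ := hmin (g c₀) hab
          exact full_repeat M hM g (fun c => U (g c) c) hab hgfix
            (fun c hc => by show U (g c) c = 1; rw [hmin c hc, hUdiag])
      · rcases h2 : finSumFinEquiv.symm c₀ with a2 | s2
        · exfalso
          apply h0
          simp [hU, Matrix.submatrix_apply, h1, h2]
        · exfalso
          have hval : U (g c₀) c₀ = (1 : Matrix (Fin l) (Fin l) R) s1 s2 := by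
            simp [hU, Matrix.submatrix_apply, h1, h2]
          by_cases hss : s1 = s2
          · exact hgc₀ (finSumFinEquiv.symm.injective (h1.trans ((hss ▸ h2).symm)))
          · exact h0 (hval.trans (Matrix.one_apply_ne hss))
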